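/- Let (L,[·,·],α,β) be a 3-dimensional simple multiplicative BiHom-Lie algebra over ℂ. Then its induced Lie algebra (L,[·,·]'), with [x,y]' = [α⁻¹(x),β⁻¹(y)], is isomorphic to sl(2,ℂ); equivalently, there exists a basis (h,e,f) of L such that [h,e]' = 2e, [h,f]' = -2f, and [e,f]' = h. -/

import Mathlib

/-- The induced bracket `[x,y]' = [α⁻¹ x, β⁻¹ y]` of a regular BiHom-Lie algebra. -/
def inducedBracket {K L : Type*} [Field K] [AddCommGroup L] [Module K L]
    (br : L →ₗ[K] L →ₗ[K] L) (α β : L ≃ₗ[K] L) (x y : L) : L :=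
  br (α.symm x) (β.symm y)

/-- `h` is an ideal of the BiHom-Lie algebra `(L, br, α, β)`. -/
def IsBiHomIdeal {K L : Type*} [Field K] [AddCommGroup L] [Module K L]
    (br : L →ₗ[K] L →ₗ[K] L) (α β : L →ₗ[K] L) (h : Submodule K L) : Prop :=
  (∀ x ∈ h, α x ∈ h) ∧ (∀ x ∈ h, β x ∈ h) ∧ (∀ x ∈ h, ∀ y : L, br x y ∈ h)

/-- `(L, br, α, β)` is simple: nonabelian and without proper ideals. -/
def IsSimpleBiHom {K L : Type*} [Field K] [AddCommGroup L] [Module K L]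
    (br : L →ₗ[K] L →ₗ[K] L) (α β : L →ₗ[K] L) : Prop :=
  (∃ x y : L, br x y ≠ 0) ∧
    ∀ h : Submodule K L, IsBiHomIdeal br α β h → h = ⊥ ∨ h = ⊤



open Polynomial Module

lemma charpolyEvalDet {n : Type*} [Fintype n] [DecidableEq n]
    (M : Matrix n n ℂ) (r : ℂ) :
    M.charpoly.eval r = (r • (1 : Matrix n n ℂ) - M).det := by
  rw [Matrix.charpoly, _root_.eval_det, Matrix.matPolyEquiv_charmatrix]
  rw [eval_sub, eval_X, eval_C]
  congr 1
  ext i j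
  simp [Matrix.scalar, Matrix.smul_apply, Matrix.one_apply, Matrix.diagonal]

lemma exists_eigenvector_of_isRoot {L : Type*} [AddCommGroup L] [Module ℂ L]
    [FiniteDimensional ℂ L] (f : Module.End ℂ L) {μ : ℂ} (h : f.charpoly.IsRoot μ) :
    ∃ v : L, v ≠ 0 ∧ f v = μ • v := by
  classical
  let b := Module.Free.chooseBasis ℂ L
  have h1 : LinearMap.det (μ • (LinearMap.id : L →ₗ[ℂ] L) - f) = 0 := by
    rw [← LinearMap.det_toMatrix b]
    have h2 : LinearMap.toMatrix b b (μ • (LinearMap.id : L →ₗ[ℂ] L) - f)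
        = μ • (1 : Matrix _ _ ℂ) - LinearMap.toMatrix b b f := by
      rw [map_sub, map_smul, LinearMap.toMatrix_id]
    rw [h2, ← charpolyEvalDet, LinearMap.charpoly_toMatrix]
    exact h
  have h3 := LinearMap.bot_lt_ker_of_det_eq_zero h1
  obtain ⟨v, hv, hv0⟩ := (Submodule.ne_bot_iff _).mp (bot_lt_iff_ne_bot.mp h3)
  refine ⟨v, hv0, ?_⟩
  have := LinearMap.mem_ker.mp hv
  simp only [LinearMap.sub_apply, LinearMap.smul_apply, LinearMap.id_apply, sub_eq_zero] at this
  exact this.symm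

open Polynomial Module in
theorem sl2_basis_of_bilinear {L : Type*} [AddCommGroup L] [Module ℂ L]
    (hdim : Module.finrank ℂ L = 3)
    (B : L →ₗ[ℂ] L →ₗ[ℂ] L)
    (hskew : ∀ x y : L, B x y = - B y x)
    (hleib : ∀ x y z : L, B (B x y) z = B x (B y z) - B y (B x z))
    (hder : Submodule.span ℂ (Set.range fun p : L × L => B p.1 p.2) = ⊤) :
    ∃ b : Basis (Fin 3) ℂ L,
      B (b 0) (b 1) = (2 : ℂ) • b 1 ∧ B (b 0) (b 2) = (-2 : ℂ) • b 2 ∧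
      B (b 1) (b 2) = b 0 := by
  classical
  have hfd : FiniteDimensional ℂ L := Module.finite_of_finrank_pos (by omega)
  have hnontriv : Nontrivial L := Module.nontrivial_of_finrank_pos (R := ℂ) (by omega)
  have hBxx : ∀ x : L, B x x = 0 := by
    intro x
    have h : B x x + B x x = 0 := by nth_rewrite 1 [hskew x x]; simp
    have h2 : (2 : ℂ) • B x x = 0 := by rw [two_smul]; exact h
    simpa using (smul_eq_zero.mp h2).resolve_left (by norm_num)
  -- trace of every `B x` is zero
  have htr : ∀ x : L, LinearMap.trace ℂ L (B x) = 0 := by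
    have hle : (⊤ : Submodule ℂ L) ≤ LinearMap.ker ((LinearMap.trace ℂ L).comp B) := by
      rw [← hder]
      refine Submodule.span_le.mpr ?_
      rintro _ ⟨⟨u, v⟩, rfl⟩
      simp only [SetLike.mem_coe, LinearMap.mem_ker, LinearMap.comp_apply]
      have hc : B (B u v) = (B u : Module.End ℂ L) * B v - (B v : Module.End ℂ L) * B u := by
        ext w
        simpa using hleib u v w
      rw [hc, map_sub, LinearMap.trace_mul_comm, sub_self]
    intro x
    exact LinearMap.mem_ker.mp (hle (Submodule.mem_top (x := x)))
  -- existence of a non-nilpotent `B x` (Engel)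
  have hex : ∃ x : L, ¬ IsNilpotent (B x : Module.End ℂ L) := by
    by_contra hcon
    push_neg at hcon
    letI : LieRing L :=
      { (inferInstance : AddCommGroup L) with
        bracket := fun x y => B x y
        add_lie := fun x y z => by simp
        lie_add := fun x y z => by simp
        lie_self := fun x => hBxx x
        leibniz_lie := fun x y z => by
          show B x (B y z) = B (B x y) z + B y (B x z)
          rw [hleib x y z]; abel }
    letI : LieAlgebra ℂ L := ⟨fun t x y => by show B x (t • y) = t • B x y; simp⟩
    haveI : IsNoetherian ℂ L := IsNoetherian.iff_fg.mpr hfd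
    have hnilp : LieModule.IsNilpotent L L := by
      rw [LieModule.isNilpotent_iff_forall' (R := ℂ)]
      intro x
      have hE : LieModule.toEnd ℂ L L x = (B x : Module.End ℂ L) := by ext y; rfl
      rw [hE]; exact hcon x
    have htop : ∀ k, LieModule.lowerCentralSeries ℂ L L k = ⊤ := by
      intro k
      induction k with
      | zero => exact LieModule.lowerCentralSeries_zero ℂ L L
      | succ n ih =>
        rw [LieModule.lowerCentralSeries_succ, ih]
        refine le_antisymm le_top ?_
        intro w _
        have hw' : w ∈ Submodule.span ℂ (Set.range fun p : L × L => B p.1 p.2) := by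
          rw [hder]; exact Submodule.mem_top
        refine Submodule.span_induction ?_ ?_ ?_ ?_ hw'
        · rintro _ ⟨⟨u, v⟩, rfl⟩
          exact LieSubmodule.lie_mem_lie (LieSubmodule.mem_top u) (LieSubmodule.mem_top v)
        · exact (⁅(⊤ : LieIdeal ℂ L), (⊤ : LieSubmodule ℂ L L)⁆).zero_mem
        · intro a b _ _ ha hb; exact add_mem ha hb
        · intro t a _ ha
          exact (⁅(⊤ : LieIdeal ℂ L), (⊤ : LieSubmodule ℂ L L)⁆).smul_mem t ha
    obtain ⟨k, hk⟩ := (LieModule.isNilpotent_iff (R := ℂ) (L := L) (M := L)).mp hnilp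
    rw [htop k] at hk
    obtain ⟨w, hwne⟩ := exists_ne (0 : L)
    have : w ∈ (⊥ : LieSubmodule ℂ L L) := by rw [← hk]; exact LieSubmodule.mem_top w
    exact hwne (by simpa using this)
  obtain ⟨x, hx⟩ := hex
  have hxne : x ≠ 0 := by
    rintro rfl
    exact hx (by simp)
  set f : Module.End ℂ L := B x with hfdef
  have hsplit : f.charpoly.Splits := IsAlgClosed.splits _
  have hmonic : f.charpoly.Monic := f.charpoly_monic
  have hdeg : f.charpoly.natDegree = 3 := by rw [f.charpoly_natDegree, hdim]
  have hcard : f.charpoly.roots.card = 3 := by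
    rw [Polynomial.splits_iff_card_roots.mp hsplit, hdeg]
  have hfx : f x = 0 := hBxx x
  have h0root : f.charpoly.IsRoot 0 := by
    have h6 : ∃ m : L, m ≠ 0 ∧ f m = 0 := ⟨x, hxne, hfx⟩
    have h2 := ((LinearMap.hasEigenvalue_zero_tfae f).out 5 2).mp h6
    simpa [Polynomial.IsRoot, ← Polynomial.coeff_zero_eq_eval_zero] using h2
  have h0mem : (0 : ℂ) ∈ f.charpoly.roots :=
    Polynomial.mem_roots'.mpr ⟨hmonic.ne_zero, h0root⟩
  have hne : ∃ μ ∈ f.charpoly.roots, μ ≠ 0 := by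
    by_contra hcon
    push_neg at hcon
    apply hx
    rw [LinearMap.isNilpotent_iff_charpoly, hdim]
    have hrep : f.charpoly.roots = Multiset.replicate 3 0 :=
      Multiset.eq_replicate.mpr ⟨hcard, hcon⟩
    conv_lhs => rw [hsplit.eq_prod_roots_of_monic hmonic, hrep]
    simp only [Multiset.map_replicate, Multiset.prod_replicate, map_zero, sub_zero]
  obtain ⟨lam, hlmem, hlne⟩ := hne
  obtain ⟨t, ht⟩ := Multiset.exists_cons_of_mem h0mem
  have hlmem' : lam ∈ t := by
    rw [ht] at hlmem
    rcases Multiset.mem_cons.mp hlmem with h | h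
    · exact absurd h hlne
    · exact h
  obtain ⟨s, hs⟩ := Multiset.exists_cons_of_mem hlmem'
  have hscard : Multiset.card s = 1 := by
    have h3 := hcard
    rw [ht, hs] at h3
    simp only [Multiset.card_cons] at h3
    omega
  obtain ⟨mu, hmu⟩ := Multiset.card_eq_one.mp hscard
  have hsum : f.charpoly.roots.sum = 0 := by
    have hts : f.charpoly.roots.sum = LinearMap.trace ℂ L f := by
      let b := Module.Free.chooseBasis ℂ L
      rw [LinearMap.trace_eq_matrix_trace ℂ b, ← LinearMap.charpoly_toMatrix f b,
        Matrix.trace_eq_sum_roots_charpoly_of_splits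
          (by rwa [LinearMap.charpoly_toMatrix])]
    rw [hts]; exact htr x
  have hmueq : mu = -lam := by
    rw [ht, hs, hmu] at hsum
    simp at hsum
    linear_combination hsum
  have hlamroot : f.charpoly.IsRoot lam :=
    (Polynomial.mem_roots'.mp hlmem).2
  have hnegmem : -lam ∈ f.charpoly.roots := by
    rw [ht, hs, hmu, hmueq]
    simp
  have hneglamroot : f.charpoly.IsRoot (-lam) := (Polynomial.mem_roots'.mp hnegmem).2
  obtain ⟨y, hyne, hy⟩ := exists_eigenvector_of_isRoot f hlamroot
  obtain ⟨z, hzne, hz⟩ := exists_eigenvector_of_isRoot f hneglamroot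
  have hlam2 : lam ≠ -lam := by
    intro h
    apply hlne
    linear_combination h / 2
  have hinj : Function.Injective ![(0 : ℂ), lam, -lam] := by
    intro i j hij
    fin_cases i <;> fin_cases j <;>
      simp only [Matrix.cons_val_zero, Matrix.cons_val_one, Matrix.head_cons,
        Matrix.cons_val_two, Matrix.tail_cons, Matrix.cons_val_fin_one] at hij <;>
      first
        | rfl
        | (exact absurd hij.symm hlne)
        | (exact absurd hij hlne)
        | (exact absurd hij hlam2)
        | (exact absurd hij.symm hlam2)
        | (exact absurd (neg_eq_zero.mp hij.symm) hlne)
        | (exact absurd (neg_eq_zero.mp hij) hlne)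
  have hli : LinearIndependent ℂ ![x, y, z] := by
    refine f.eigenvectors_linearIndependent' ![(0 : ℂ), lam, -lam] hinj ![x, y, z] ?_
    intro i
    fin_cases i
    · exact ⟨Module.End.mem_eigenspace_iff.mpr (by simpa using hfx), hxne⟩
    · exact ⟨Module.End.mem_eigenspace_iff.mpr (by simpa using hy), hyne⟩
    · exact ⟨Module.End.mem_eigenspace_iff.mpr (by simpa using hz), hzne⟩
  have hcard3 : Fintype.card (Fin 3) = Module.finrank ℂ L := by simp [hdim]
  let b0 : Basis (Fin 3) ℂ L := basisOfLinearIndependentOfCardEqFinrank hli hcard3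
  have hb0 : ⇑b0 = ![x, y, z] := coe_basisOfLinearIndependentOfCardEqFinrank hli hcard3
  -- B x (B y z) = 0
  have hxy : B x y = lam • y := hy
  have hxz : B x z = (-lam) • z := hz
  have hByz0 : B x (B y z) = 0 := by
    have h := hleib x y z
    rw [hxy, hxz] at h
    simp only [map_smul, LinearMap.smul_apply, map_smul] at h
    -- h : lam • B y z = B x (B y z) - -lam • B y z
    have h2 : B x (B y z) = lam • B y z + (-lam) • B y z := (sub_eq_iff_eq_add.mp h.symm)
    rw [h2, ← add_smul]
    simp
  -- coordinates of B y z
  set r0 : ℂ := b0.repr (B y z) 0 with hr0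
  set r1 : ℂ := b0.repr (B y z) 1 with hr1
  set r2 : ℂ := b0.repr (B y z) 2 with hr2
  have hrep : B y z = r0 • x + r1 • y + r2 • z := by
    have := b0.sum_repr (B y z)
    rw [Fin.sum_univ_three] at this
    rw [← this, hb0]
    simp [hr0, hr1, hr2]
  have hco : r1 = 0 ∧ r2 = 0 := by
    have h0 : (0 : L) = (r1 * lam) • y + (r2 * -lam) • z := by
      have := congrArg (B x) hrep
      rw [hByz0] at this
      simp only [map_add, map_smul] at this
      rw [hfx, hxy, hxz] at this
      rw [this]
      rw [smul_smul, smul_smul]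
      simp
    have hz0 : (0 : ℂ) • x + (r1 * lam) • y + (r2 * -lam) • z = 0 := by
      rw [zero_smul, zero_add, ← h0]
    have hall := Fintype.linearIndependent_iff.mp hli ![0, r1 * lam, r2 * -lam] ?_
    · have e1 := hall 1
      have e2 := hall 2
      simp at e1 e2
      constructor
      · rcases e1 with h | h
        · exact h
        · exact absurd h hlne
      · rcases e2 with h | h
        · exact h
        · exact absurd h hlne
    · rw [Fin.sum_univ_three]
      simpa using hz0
  have hByz : B y z = r0 • x := by
    rw [hrep, hco.1, hco.2]; simp
  -- r0 ≠ 0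
  have hr0ne : r0 ≠ 0 := by
    intro hr00
    have hByz' : B y z = 0 := by rw [hByz, hr00, zero_smul]
    set S : Submodule ℂ L := Submodule.span ℂ {y, z} with hS
    have hyS : y ∈ S := Submodule.subset_span (by simp)
    have hzS : z ∈ S := Submodule.subset_span (by simp)
    have hbasis : ∀ i j : Fin 3, B (b0 i) (b0 j) ∈ S := by
      intro i j
      have hyx : B y x = -(lam • y) := by rw [hskew y x, hxy]
      have hzx : B z x = -((-lam) • z) := by rw [hskew z x, hxz]
      have hzy : B z y = 0 := by rw [hskew z y, hByz', neg_zero]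
      rw [hb0]
      fin_cases i <;> fin_cases j
      · show B x x ∈ S; rw [hBxx]; exact S.zero_mem
      · show B x y ∈ S; rw [hxy]; exact S.smul_mem _ hyS
      · show B x z ∈ S; rw [hxz]; exact S.smul_mem _ hzS
      · show B y x ∈ S; rw [hyx]; exact S.neg_mem (S.smul_mem _ hyS)
      · show B y y ∈ S; rw [hBxx]; exact S.zero_mem
      · show B y z ∈ S; rw [hByz']; exact S.zero_mem
      · show B z x ∈ S; rw [hzx]; exact S.neg_mem (S.smul_mem _ hzS)
      · show B z y ∈ S; rw [hzy]; exact S.zero_mem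
      · show B z z ∈ S; rw [hBxx]; exact S.zero_mem
    have hall : ∀ u v : L, B u v ∈ S := by
      intro u v
      have hu := b0.sum_repr u
      have hv := b0.sum_repr v
      rw [← hu, ← hv]
      rw [Fin.sum_univ_three, Fin.sum_univ_three]
      simp only [map_add, map_smul, LinearMap.add_apply, LinearMap.smul_apply]
      refine S.add_mem (S.add_mem ?_ ?_) ?_ <;>
        refine S.smul_mem _ (S.add_mem (S.add_mem ?_ ?_) ?_) <;>
        exact S.smul_mem _ (hbasis _ _)
    have htopS : (⊤ : Submodule ℂ L) ≤ S := by
      rw [← hder]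
      refine Submodule.span_le.mpr ?_
      rintro _ ⟨⟨u, v⟩, rfl⟩
      exact hall u v
    have hxS : x ∈ S := htopS Submodule.mem_top
    have hnot : x ∉ S := by
      have h := hli.notMem_span_image (s := {1, 2}) (x := (0 : Fin 3)) (by simp)
      have himg : (![x, y, z] '' {1, 2} : Set L) = {y, z} := by
        ext w
        simp [Set.image_insert_eq]
      rw [himg] at h
      simpa using h
    exact hnot hxS
  -- final basis
  set hv : L := (2 / lam) • x with hhv
  set fv : L := (2 / (lam * r0)) • z with hfv
  have hvne : hv ≠ 0 := smul_ne_zero (by simp [hlne]) hxne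
  have hfvne : fv ≠ 0 := smul_ne_zero (by simp [hlne, hr0ne]) hzne
  have hli2 : LinearIndependent ℂ ![hv, y, fv] := by
    refine f.eigenvectors_linearIndependent' ![(0 : ℂ), lam, -lam] hinj ![hv, y, fv] ?_
    intro i
    fin_cases i
    · refine ⟨Module.End.mem_eigenspace_iff.mpr ?_, hvne⟩
      simp [hhv, map_smul, hfx]
    · exact ⟨Module.End.mem_eigenspace_iff.mpr (by simpa using hy), hyne⟩
    · refine ⟨Module.End.mem_eigenspace_iff.mpr ?_, hfvne⟩
      show f fv = (-lam) • fv
      rw [hfv, map_smul, hz, smul_smul, smul_smul]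
      ring_nf
  let b : Basis (Fin 3) ℂ L := basisOfLinearIndependentOfCardEqFinrank hli2 hcard3
  have hb : ⇑b = ![hv, y, fv] := coe_basisOfLinearIndependentOfCardEqFinrank hli2 hcard3
  refine ⟨b, ?_, ?_, ?_⟩
  · show B (b 0) (b 1) = (2 : ℂ) • b 1
    rw [hb]
    show B hv y = (2 : ℂ) • y
    simp only [hhv, map_smul, LinearMap.smul_apply, hxy, smul_smul]
    congr 1
    field_simp
  · show B (b 0) (b 2) = (-2 : ℂ) • b 2
    rw [hb]
    show B hv fv = (-2 : ℂ) • fv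
    simp only [hhv, hfv, map_smul, LinearMap.smul_apply, hxz, smul_smul]
    congr 1
    field_simp
  · show B (b 1) (b 2) = b 0
    rw [hb]
    show B y fv = hv
    simp only [hfv, map_smul, hByz, smul_smul, hhv]
    congr 1
    field_simp

/-- The induced Lie algebra of a 3-dimensional simple
multiplicative BiHom-Lie algebra over `ℂ` is isomorphic to `sl(2, ℂ)`: there is a
basis `(h, e, f)` with `[h,e]' = 2e`, `[h,f]' = -2f` and `[e,f]' = h`. -/
theorem induced_lie_of_dim_three_is_sl2 {L : Type*} [AddCommGroup L] [Module ℂ L]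
    (hdim : Module.finrank ℂ L = 3)
    (br : L →ₗ[ℂ] L →ₗ[ℂ] L) (α β : L ≃ₗ[ℂ] L)
    (hcomm : ∀ x : L, α (β x) = β (α x))
    (hmulα : ∀ x y : L, α (br x y) = br (α x) (α y))
    (hmulβ : ∀ x y : L, β (br x y) = br (β x) (β y))
    (hskew : ∀ x y : L, br (β x) (α y) = - br (β y) (α x))
    (hjac : ∀ x y z : L,
      br (β (β x)) (br (β y) (α z)) + br (β (β y)) (br (β z) (α x))
        + br (β (β z)) (br (β x) (α y)) = 0)
    (hsimple : IsSimpleBiHom br α.toLinearMap β.toLinearMap) :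
    ∃ b : Basis (Fin 3) ℂ L,
      inducedBracket br α β (b 0) (b 1) = (2 : ℂ) • b 1 ∧
      inducedBracket br α β (b 0) (b 2) = (-2 : ℂ) • b 2 ∧
      inducedBracket br α β (b 1) (b 2) = b 0 := by
  classical
  set B : L →ₗ[ℂ] L →ₗ[ℂ] L := br.compl₁₂ α.symm.toLinearMap β.symm.toLinearMap with hBdef
  have hB : ∀ x y : L, B x y = br (α.symm x) (β.symm y) := fun x y => rfl
  have hindB : ∀ x y : L, inducedBracket br α β x y = B x y := fun x y => rfl
  -- inverses are multiplicative
  have hmulα' : ∀ x y : L, α.symm (br x y) = br (α.symm x) (α.symm y) := by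
    intro x y
    apply α.injective
    rw [hmulα]
    simp
  have hmulβ' : ∀ x y : L, β.symm (br x y) = br (β.symm x) (β.symm y) := by
    intro x y
    apply β.injective
    rw [hmulβ]
    simp
  -- commutation lemmas
  have c2 : ∀ x : L, β (α.symm x) = α.symm (β x) := by
    intro x
    apply α.injective
    rw [hcomm (α.symm x)]
    simp
  have c3 : ∀ x : L, α (β.symm x) = β.symm (α x) := by
    intro x
    apply β.injective
    rw [← hcomm (β.symm x)]
    simp
  have c4 : ∀ x : L, β.symm (α.symm x) = α.symm (β.symm x) := by
    intro x
    apply β.injective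
    rw [c2]
    simp
  -- skew-symmetry of B
  have hskewB : ∀ a b : L, B a b = - B b a := by
    intro a b
    have h := hskew (β.symm (α.symm a)) (α.symm (β.symm b))
    simp only [c2, c3, c4, LinearEquiv.apply_symm_apply, LinearEquiv.symm_apply_apply] at h
    simp only [hB]
    exact h
  -- cyclic Jacobi identity for B
  have hjacB : ∀ X Y Z : L, B X (B Y Z) + B Y (B Z X) + B Z (B X Y) = 0 := by
    intro X Y Z
    have h := hjac (α.symm (β.symm (β.symm X))) (α.symm (β.symm (β.symm Y)))
      (α.symm (β.symm (β.symm Z)))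
    simp only [c2, c3, c4, LinearEquiv.apply_symm_apply, LinearEquiv.symm_apply_apply] at h
    simp only [hB, hmulβ', c4]
    exact h
  -- Leibniz form
  have hleibB : ∀ x y z : L, B (B x y) z = B x (B y z) - B y (B x z) := by
    intro x y z
    have h := hjacB x y z
    rw [hskewB z x, map_neg] at h
    rw [hskewB (B x y) z]
    have hc := eq_neg_of_add_eq_zero_right h
    rw [hc, neg_neg, ← sub_eq_add_neg]
  -- the derived algebra is everything
  have hderiv : Submodule.span ℂ (Set.range fun p : L × L => B p.1 p.2) = ⊤ := by
    have hrange : (Set.range fun p : L × L => B p.1 p.2)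
        = (Set.range fun p : L × L => br p.1 p.2) := by
      ext w
      constructor
      · rintro ⟨⟨u, v⟩, rfl⟩
        exact ⟨(α.symm u, β.symm v), rfl⟩
      · rintro ⟨⟨u, v⟩, rfl⟩
        refine ⟨(α u, β v), ?_⟩
        simp only [hB, LinearEquiv.symm_apply_apply]
    rw [hrange]
    obtain ⟨⟨u0, v0, huv⟩, hmax⟩ := hsimple
    set D := Submodule.span ℂ (Set.range fun p : L × L => br p.1 p.2) with hD
    have hideal : IsBiHomIdeal br α.toLinearMap β.toLinearMap D := by
      refine ⟨?_, ?_, ?_⟩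
      · intro w hw
        refine Submodule.span_induction ?_ ?_ ?_ ?_ hw
        · rintro _ ⟨⟨u, v⟩, rfl⟩
          exact Submodule.subset_span ⟨(α u, α v), (hmulα u v).symm⟩
        · simp
        · intro a b _ _ ha hb
          rw [map_add]; exact D.add_mem ha hb
        · intro t a _ ha
          rw [map_smul]; exact D.smul_mem t ha
      · intro w hw
        refine Submodule.span_induction ?_ ?_ ?_ ?_ hw
        · rintro _ ⟨⟨u, v⟩, rfl⟩
          exact Submodule.subset_span ⟨(β u, β v), (hmulβ u v).symm⟩
        · simp
        · intro a b _ _ ha hb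
          rw [map_add]; exact D.add_mem ha hb
        · intro t a _ ha
          rw [map_smul]; exact D.smul_mem t ha
      · intro w _ v
        exact Submodule.subset_span ⟨(w, v), rfl⟩
    rcases hmax D hideal with h | h
    · exfalso
      apply huv
      have : br u0 v0 ∈ D := Submodule.subset_span ⟨(u0, v0), rfl⟩
      rw [h] at this
      simpa using this
    · exact h
  obtain ⟨b, h1, h2, h3⟩ := sl2_basis_of_bilinear hdim B hskewB hleibB hderiv
  exact ⟨b, by rw [hindB, h1], by rw [hindB, h2], by rw [hindB, h3]⟩
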